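/- Mutual-coherence sufficient condition for P'_{ℓ2/ℓ1} (Corollary 4 with q = 2): if (2k−1)μ_S < 1, where μ_S is the mutual subspace coherence, then ζ_k + ζ_{k−1} < 1, and hence the exchange condition of Proposition 4 holds for q = 2 (where ε'_2 = 0). -/

import Mathlib

open scoped BigOperators

/-- The subspace coherence of two subspaces of `R^D`. -/
noncomputable def subCoh {D : ℕ} (S T : Submodule ℝ (EuclideanSpace ℝ (Fin D))) : ℝ :=
  sSup {r : ℝ | ∃ x ∈ S, ∃ z ∈ T, x ≠ 0 ∧ z ≠ 0 ∧ r = |(inner ℝ x z : ℝ)| / (‖x‖ * ‖z‖)}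

/-- The `k`-cumulative subspace coherence `ζ_k` of a collection of subspaces. -/
noncomputable def zeta {D n : ℕ} (S : Fin n → Submodule ℝ (EuclideanSpace ℝ (Fin D)))
    (k : ℕ) : ℝ :=
  sSup {r : ℝ | ∃ (Λ : Finset (Fin n)) (i : Fin n),
    Λ.card = k ∧ i ∉ Λ ∧ r = ∑ j ∈ Λ, subCoh (S i) (S j)}

/-- The mutual subspace coherence `μ_S` of a collection of subspaces. -/
noncomputable def muS {D n : ℕ} (S : Fin n → Submodule ℝ (EuclideanSpace ℝ (Fin D))) : ℝ :=
  sSup {r : ℝ | ∃ i j : Fin n, i ≠ j ∧ r = subCoh (S i) (S j)}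

lemma subCoh_mem_le_one {D : ℕ} {S T : Submodule ℝ (EuclideanSpace ℝ (Fin D))} {r : ℝ}
    (hr : r ∈ {r : ℝ | ∃ x ∈ S, ∃ z ∈ T, x ≠ 0 ∧ z ≠ 0 ∧ r = |(inner ℝ x z : ℝ)| / (‖x‖ * ‖z‖)}) :
    0 ≤ r ∧ r ≤ 1 := by
  obtain ⟨x, hx, z, hz, hx0, hz0, rfl⟩ := hr
  have hpos : 0 < ‖x‖ * ‖z‖ :=
    mul_pos (norm_pos_iff.mpr hx0) (norm_pos_iff.mpr hz0)
  constructor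
  · positivity
  · rw [div_le_one hpos]
    exact abs_real_inner_le_norm x z

lemma subCoh_nonneg {D : ℕ} (S T : Submodule ℝ (EuclideanSpace ℝ (Fin D))) :
    0 ≤ subCoh S T := by
  unfold subCoh
  rcases Set.eq_empty_or_nonempty
      {r : ℝ | ∃ x ∈ S, ∃ z ∈ T, x ≠ 0 ∧ z ≠ 0 ∧ r = |(inner ℝ x z : ℝ)| / (‖x‖ * ‖z‖)} with h | h
  · rw [h, Real.sSup_empty]
  · obtain ⟨r, hr⟩ := h
    have hb : ∀ y ∈ {r : ℝ | ∃ x ∈ S, ∃ z ∈ T, x ≠ 0 ∧ z ≠ 0 ∧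
        r = |(inner ℝ x z : ℝ)| / (‖x‖ * ‖z‖)}, y ≤ 1 := fun y hy => (subCoh_mem_le_one hy).2
    exact le_trans (subCoh_mem_le_one hr).1 (le_csSup ⟨1, hb⟩ hr)

lemma muS_nonneg {D n : ℕ} (S : Fin n → Submodule ℝ (EuclideanSpace ℝ (Fin D))) :
    0 ≤ muS S := by
  unfold muS
  rcases Set.eq_empty_or_nonempty
      {r : ℝ | ∃ i j : Fin n, i ≠ j ∧ r = subCoh (S i) (S j)} with h | h
  · rw [h, Real.sSup_empty]
  · obtain ⟨r, ⟨i, j, hij, rfl⟩⟩ := h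
    have hb : ∀ y ∈ {r : ℝ | ∃ i j : Fin n, i ≠ j ∧ r = subCoh (S i) (S j)}, y ≤ 1 := by
      rintro y ⟨a, b, hab, rfl⟩
      exact Real.sSup_le (fun x hx => (subCoh_mem_le_one hx).2) one_pos.le
    exact le_trans (subCoh_nonneg _ _) (le_csSup ⟨1, hb⟩ ⟨i, j, hij, rfl⟩)

lemma subCoh_le_muS {D n : ℕ} (S : Fin n → Submodule ℝ (EuclideanSpace ℝ (Fin D)))
    {i j : Fin n} (hij : i ≠ j) : subCoh (S i) (S j) ≤ muS S := by
  have hb : ∀ y ∈ {r : ℝ | ∃ i j : Fin n, i ≠ j ∧ r = subCoh (S i) (S j)}, y ≤ 1 := by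
    rintro y ⟨a, b, hab, rfl⟩
    exact Real.sSup_le (fun x hx => (subCoh_mem_le_one hx).2) one_pos.le
  exact le_csSup ⟨1, hb⟩ ⟨i, j, hij, rfl⟩

lemma zeta_le {D n : ℕ} (S : Fin n → Submodule ℝ (EuclideanSpace ℝ (Fin D))) (m : ℕ) :
    zeta S m ≤ (m : ℝ) * muS S := by
  have hnn : (0 : ℝ) ≤ (m : ℝ) * muS S :=
    mul_nonneg (Nat.cast_nonneg m) (muS_nonneg S)
  apply Real.sSup_le _ hnn
  rintro r ⟨Λ, i, hcard, hiΛ, rfl⟩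
  calc ∑ j ∈ Λ, subCoh (S i) (S j) ≤ ∑ _j ∈ Λ, muS S := by
        apply Finset.sum_le_sum
        intro j hj
        exact subCoh_le_muS S (fun h => hiΛ (h ▸ hj))
    _ = (m : ℝ) * muS S := by rw [Finset.sum_const, hcard, nsmul_eq_mul]

/-- Corollary 4 for `q = 2`: if `(2k−1)μ_S < 1` then
`ζ_k + ζ_{k−1} < 1` (which is the sufficient condition of Proposition 4 for `q = 2`,
where `ε'_2 = 0`). -/
theorem mutual_coherence_condition {D n : ℕ}
    (S : Fin n → Submodule ℝ (EuclideanSpace ℝ (Fin D)))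
    (hdisj : ∀ i j : Fin n, i ≠ j → S i ⊓ S j = ⊥)
    (k : ℕ) (hk : 1 ≤ k) (hkn : k ≤ n)
    (hcond : (2 * (k : ℝ) - 1) * muS S < 1) :
    zeta S k + zeta S (k - 1) < 1 := by
  have h1 := zeta_le S k
  have h2 := zeta_le S (k - 1)
  have hcast : ((k - 1 : ℕ) : ℝ) = (k : ℝ) - 1 := by
    rw [Nat.cast_sub hk]; norm_num
  calc zeta S k + zeta S (k - 1) ≤ (k : ℝ) * muS S + ((k : ℝ) - 1) * muS S := by
        rw [← hcast]; exact add_le_add h1 h2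
    _ = (2 * (k : ℝ) - 1) * muS S := by ring
    _ < 1 := hcond
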